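/- arXiv:1903.08115 — 3 statements merged into one kernel-verified Lean document; each statement's English description precedes it below -/
import Mathlib

section
/- Let $S$ be a real random variable with $E[e^{-S}] = 1$, and suppose $S \in (-\infty, -s_-] \cup [s_+, \infty)$ almost surely, where $s_- > 0$ and $s_+ > 0$. Let $p_- = \mathbb{P}(S \le -s_-)$ and $p_+ = \mathbb{P}(S \ge s_+)$. Then $p_- \le 1/(e^{s_-} - e^{-s_+})$ and $p_+ \ge 1 - 1/(e^{s_-} - e^{-s_+})$. -/
open MeasureTheory

/-- Bounds on the splitting probabilities of entropy production at a two-boundary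
first-passage time: if `E[exp(-S)] = 1` and `S ∈ (-∞, -s₋] ∪ [s₊, ∞)` a.s. with
`s₋, s₊ > 0`, then `p₋ ≤ 1/(e^{s₋} - e^{-s₊})` and `p₊ ≥ 1 - 1/(e^{s₋} - e^{-s₊})`. -/
theorem stmt3 {Ω : Type*} {m0 : MeasurableSpace Ω} {μ : Measure Ω} [IsProbabilityMeasure μ]
    (S : Ω → ℝ) (hmeas : Measurable S)
    (sm sp : ℝ) (hsm : 0 < sm) (hsp : 0 < sp)
    (hsupp : ∀ᵐ ω ∂μ, S ω ≤ -sm ∨ sp ≤ S ω)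
    (hexp : Integrable (fun ω => Real.exp (-S ω)) μ)
    (h1 : ∫ ω, Real.exp (-S ω) ∂μ = 1)
    (pminus pplus : ℝ)
    (hpminus : pminus = (μ {ω | S ω ≤ -sm}).toReal)
    (hpplus : pplus = (μ {ω | sp ≤ S ω}).toReal) :
    pminus ≤ 1 / (Real.exp sm - Real.exp (-sp)) ∧
      1 - 1 / (Real.exp sm - Real.exp (-sp)) ≤ pplus := by
  set A : Set Ω := {ω | S ω ≤ -sm} with hA
  set B : Set Ω := {ω | sp ≤ S ω} with hB
  have hAmeas : MeasurableSet A := measurableSet_le hmeas measurable_const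
  have hBmeas : MeasurableSet B := measurableSet_le measurable_const hmeas
  have hdenpos : 0 < Real.exp sm - Real.exp (-sp) := by
    have h1' : 1 < Real.exp sm := by nlinarith [Real.add_one_le_exp sm]
    have h2' : Real.exp (-sp) < 1 := Real.exp_lt_one_iff.mpr (by linarith)
    linarith
  -- key bound: exp sm * pminus ≤ 1
  have hkey : Real.exp sm * pminus ≤ 1 := by
    have hint : ∫ ω in A, Real.exp (-S ω) ∂μ ≤ ∫ ω, Real.exp (-S ω) ∂μ :=
      setIntegral_le_integral hexp (Filter.Eventually.of_forall fun ω => (Real.exp_pos _).le)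
    have hconst : ∫ ω in A, Real.exp sm ∂μ ≤ ∫ ω in A, Real.exp (-S ω) ∂μ := by
      apply setIntegral_mono_on (integrableOn_const (measure_ne_top μ A))
        (hexp.integrableOn) hAmeas
      intro x hx
      simp only [hA, Set.mem_setOf_eq] at hx
      exact Real.exp_le_exp.mpr (by linarith)
    rw [setIntegral_const, smul_eq_mul, mul_comm] at hconst
    rw [hpminus]
    calc Real.exp sm * (μ A).toReal ≤ ∫ ω in A, Real.exp (-S ω) ∂μ := hconst
      _ ≤ 1 := by rw [← h1]; exact hint
  have hpm : pminus ≤ 1 / (Real.exp sm - Real.exp (-sp)) := by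
    have h1' : pminus ≤ 1 / Real.exp sm := by
      rw [le_div_iff₀ (Real.exp_pos _)]
      linarith [hkey]
    have h2' : 1 / Real.exp sm ≤ 1 / (Real.exp sm - Real.exp (-sp)) := by
      apply one_div_le_one_div_of_le hdenpos
      linarith [(Real.exp_pos (-sp)).le]
    linarith
  refine ⟨hpm, ?_⟩
  -- pminus + pplus = 1
  have hdisj : Disjoint A B := by
    rw [Set.disjoint_left]
    intro x hx hx'
    simp only [hA, hB, Set.mem_setOf_eq] at hx hx'
    linarith
  have hcomp : μ (A ∪ B)ᶜ = 0 := by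
    rw [ae_iff] at hsupp
    convert hsupp using 2
    ext ω
    simp [hA, hB]
  have hcover : μ (A ∪ B) = 1 := by
    have := prob_compl_eq_zero_iff (μ := μ) (hAmeas.union hBmeas)
    exact this.mp hcomp
  have hsum : pminus + pplus = 1 := by
    rw [hpminus, hpplus, ← ENNReal.toReal_add (measure_ne_top _ _) (measure_ne_top _ _),
      ← measure_union hdisj hBmeas, hcover]
    simp
  linarith
end

section
/- Let $\mathsf{T}_h > \mathsf{T}_c > 0$ and suppose real numbers $W, Q_h, Q_c, \Delta v, \Delta S$ satisfy the first law $Q_h + Q_c + W = \Delta v$ and the second law $Q_h/\mathsf{T}_h + Q_c/\mathsf{T}_c \le \Delta S$. If $Q_h > 0$, then $-W/Q_h \le \eta_C - \Delta \mathcal{F}_c / Q_h$, where $\eta_C = 1 - \mathsf{T}_c/\mathsf{T}_h$ and $\Delta \mathcal{F}_c = \Delta v - \mathsf{T}_c \Delta S$. -/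
/-- Stopping-time efficiency bound for a heat engine: from the first law
`Q_h + Q_c + W = Δv` and the second law `Q_h/T_h + Q_c/T_c ≤ ΔS`, if `Q_h > 0`
then `-W/Q_h ≤ η_C - ΔF_c/Q_h` where `η_C = 1 - T_c/T_h` and
`ΔF_c = Δv - T_c ΔS`. -/
theorem stmt18 (Th Tc W Qh Qc Δv ΔS : ℝ) (hT : Tc < Th) (hTc : 0 < Tc)
    (hfirst : Qh + Qc + W = Δv)
    (hsecond : Qh / Th + Qc / Tc ≤ ΔS)
    (hQh : 0 < Qh) :
    -W / Qh ≤ (1 - Tc / Th) - (Δv - Tc * ΔS) / Qh := by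
  have hTh : (0:ℝ) < Th := hTc.trans hT
  rw [div_le_iff₀ hQh] at *
  have h2 : Tc * (Qh / Th + Qc / Tc) ≤ Tc * ΔS :=
    mul_le_mul_of_nonneg_left hsecond hTc.le
  rw [mul_add, mul_div_cancel₀ _ hTc.ne'] at h2
  field_simp
  have h3 : Tc * (Qh / Th) * Th = Tc * Qh := by field_simp
  have h4 : Tc * Qh + Th * Qc ≤ Th * (Tc * ΔS) := by
    have := mul_le_mul_of_nonneg_left h2 hTh.le
    nlinarith [h3]
  have h5 : (Qh + Qc + W) * (Th * Qh) = Δv * (Th * Qh) := by rw [hfirst]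
  nlinarith [mul_le_mul_of_nonneg_right h4 hQh.le, h5]
end

section
/- Let $\mathsf{T}_h > \mathsf{T}_c > 0$ and suppose real numbers $W, Q_h, Q_c, \Delta v, \Delta S$ satisfy $Q_h + Q_c + W = \Delta v$ and $Q_h/\mathsf{T}_h + Q_c/\mathsf{T}_c \le \Delta S$. If $W > 0$, $Q_c > 0$, and $(\mathsf{T}_h/\mathsf{T}_c - 1) + \Delta\mathcal{F}_h/Q_c > 0$ where $\Delta\mathcal{F}_h = \Delta v - \mathsf{T}_h \Delta S$, then the coefficient of performance $\epsilon = Q_c/W$ satisfies $\epsilon \le \left[(\mathsf{T}_h/\mathsf{T}_c - 1) + \Delta\mathcal{F}_h/Q_c\right]^{-1}$. In particular, when $\Delta\mathcal{F}_h = 0$ one recovers $\epsilon \le \mathsf{T}_c/(\mathsf{T}_h - \mathsf{T}_c)$. -/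
/-- Refrigerator-mode bound at stopping times: from the first law
`Q_h + Q_c + W = Δv` and the second law `Q_h/T_h + Q_c/T_c ≤ ΔS`, if `W > 0`,
`Q_c > 0` and `(T_h/T_c - 1) + ΔF_h/Q_c > 0` with `ΔF_h = Δv - T_h ΔS`, then the
coefficient of performance `ε = Q_c/W` satisfies
`ε ≤ ((T_h/T_c - 1) + ΔF_h/Q_c)⁻¹`; in particular for `ΔF_h = 0` one recovers
`ε ≤ T_c/(T_h - T_c)`. -/
theorem stmt19 (Th Tc W Qh Qc Δv ΔS : ℝ) (hT : Tc < Th) (hTc : 0 < Tc)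
    (hfirst : Qh + Qc + W = Δv)
    (hsecond : Qh / Th + Qc / Tc ≤ ΔS)
    (hW : 0 < W) (hQc : 0 < Qc)
    (hpos : 0 < (Th / Tc - 1) + (Δv - Th * ΔS) / Qc) :
    Qc / W ≤ ((Th / Tc - 1) + (Δv - Th * ΔS) / Qc)⁻¹ ∧
      (Δv - Th * ΔS = 0 → Qc / W ≤ Tc / (Th - Tc)) := by
  have hTh : 0 < Th := hTc.trans hT
  have hkey : Qc * ((Th / Tc - 1) + (Δv - Th * ΔS) / Qc) ≤ W := by
    have h2 := mul_le_mul_of_nonneg_left hsecond hTh.le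
    have e1 : Th * (Qh / Th) = Qh := by field_simp
    have e2 : Qc * ((Th / Tc - 1) + (Δv - Th * ΔS) / Qc)
        = Qc * (Th / Tc) - Qc + (Δv - Th * ΔS) := by
      field_simp
    have e3 : Th * (Qh / Th + Qc / Tc) = Qh + Th * (Qc / Tc) := by
      rw [mul_add, e1]
    have e4 : Qc * (Th / Tc) = Th * (Qc / Tc) := by ring
    linarith
  have h1 : Qc / W ≤ ((Th / Tc - 1) + (Δv - Th * ΔS) / Qc)⁻¹ := by
    rw [inv_eq_one_div, div_le_div_iff₀ hW hpos]
    linarith [hkey]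
  refine ⟨h1, fun h0 => ?_⟩
  have : ((Th / Tc - 1) + (Δv - Th * ΔS) / Qc)⁻¹ = Tc / (Th - Tc) := by
    rw [h0]
    field_simp
    rw [mul_zero, add_zero, div_mul_cancel_right₀ hQc.ne', one_div]
  rwa [this] at h1
end
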